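/- Let V ∼ Unif({1,…,ℓ^n}) for some ℓ, n ≥ 1, and let X_1,…,X_k (with k ≤ n) be discrete random variables on the same probability space with cardinalities |𝒳_i| ≤ ℓ for i = 1,…,k, such that (X_1,…,X_k) ≤ι V. Then the following three statements are equivalent: (1) X_1,…,X_k are mutually independent, each uniformly distributed with cardinality ℓ; (2) there exist random variables Y_1,…,Y_{n−k} with cardinalities |𝒴_i| ≤ ℓ for i = 1,…,n−k such that ((X_1,…,X_k),(Y_1,…,Y_{n−k})) =ι V; (3) there exist random variables Y_1,…,Y_{n−k}, each uniformly distributed with cardinality ℓ, such that ((X_1,…,X_k),(Y_1,…,Y_{n−k})) =ι V. -/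

import Mathlib

namespace Paper

/-- The probability of an event under a probability mass function. -/
noncomputable def pr {Ω : Type} (μ : PMF Ω) (E : Set Ω) : ENNReal :=
  μ.toOuterMeasure E

/-- Conditional independence `X ⊥⊥ Y | Z`:
`p(x,y,z) p(z) = p(x,z) p(y,z)` for all `x, y, z`. -/
def CondIndep {Ω α β γ : Type} (μ : PMF Ω) (X : Ω → α) (Y : Ω → β) (Z : Ω → γ) : Prop :=
  ∀ (x : α) (y : β) (z : γ),
    pr μ {ω | X ω = x ∧ Y ω = y ∧ Z ω = z} * pr μ {ω | Z ω = z}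
      = pr μ {ω | X ω = x ∧ Z ω = z} * pr μ {ω | Y ω = y ∧ Z ω = z}

/-- Unconditional independence `X ⊥⊥ Y`. -/
def Indep {Ω α β : Type} (μ : PMF Ω) (X : Ω → α) (Y : Ω → β) : Prop :=
  ∀ (x : α) (y : β),
    pr μ {ω | X ω = x ∧ Y ω = y} = pr μ {ω | X ω = x} * pr μ {ω | Y ω = y}

/-- `X ≥ι Y`: `X` functionally determines `Y` (with probability one). -/
def FunDep {Ω α β : Type} (μ : PMF Ω) (X : Ω → α) (Y : Ω → β) : Prop :=
  ∃ f : α → β, ∀ ω ∈ μ.support, Y ω = f (X ω)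

/-- `X =ι Y`: informational equivalence. -/
def InfoEq {Ω α β : Type} (μ : PMF Ω) (X : Ω → α) (Y : Ω → β) : Prop :=
  FunDep μ X Y ∧ FunDep μ Y X

/-- The random variable `X` has finite support. -/
def FinSupp {Ω α : Type} (μ : PMF Ω) (X : Ω → α) : Prop :=
  (X '' μ.support).Finite

/-- The random variable `X` has support of cardinality at most `ℓ`. -/
def CardLE {Ω α : Type} (μ : PMF Ω) (X : Ω → α) (ℓ : ℕ) : Prop :=
  ∃ s : Finset α, s.card ≤ ℓ ∧ ∀ ω ∈ μ.support, X ω ∈ s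

/-- `X` is uniformly distributed with support of cardinality `ℓ`. -/
def UniformCard {Ω α : Type} (μ : PMF Ω) (X : Ω → α) (ℓ : ℕ) : Prop :=
  ∃ S : Finset α, S.card = ℓ ∧ (∀ x ∈ S, pr μ {ω | X ω = x} = (ℓ : ENNReal)⁻¹) ∧
    ∀ x, x ∉ S → pr μ {ω | X ω = x} = 0

/-- The probability mass function of the random variable `X`. -/
noncomputable def distOf {Ω α : Type} (μ : PMF Ω) (X : Ω → α) : α → ENNReal :=
  fun x => pr μ {ω | X ω = x}

/-- `p ⪰ q` : `p` majorizes `q`, i.e. for every `k`, the sum of the `k` largest values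
of `p` is at least the sum of the `k` largest values of `q`. -/
def Majorizes (p q : ℕ → ENNReal) : Prop :=
  ∀ s : Finset ℕ, ∃ t : Finset ℕ, t.card ≤ s.card ∧ ∑ x ∈ s, q x ≤ ∑ x ∈ t, p x

/-- `T` is a sufficient statistic of `X` for `U`: `X ≥ι T` and `U ⊥⊥ X | T`. -/
def SuffStat {Ω α β γ : Type} (μ : PMF Ω) (X : Ω → α) (U : Ω → β) (T : Ω → γ) : Prop :=
  FunDep μ X T ∧ CondIndep μ U X T

/-- `T` is a minimal sufficient statistic of `X` for `U`. -/
def MinSuffStat {Ω α β γ : Type} (μ : PMF Ω) (X : Ω → α) (U : Ω → β) (T : Ω → γ) : Prop :=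
  SuffStat μ X U T ∧
    ∀ (δ : Type) (T' : Ω → δ), SuffStat μ X U T' → FunDep μ T' T

/-- Mutual independence of the subfamily `(V i)_{i ∈ s}`: each `V i` (for `i ∈ s`) is
independent of the joint variable of the others. -/
def MutIndepOn {Ω ι : Type} {β : ι → Type} (μ : PMF Ω) (V : ∀ i, Ω → β i)
    (s : Finset ι) : Prop :=
  ∀ i ∈ s, Indep μ (V i) (fun ω => fun j : {j // j ∈ s ∧ j ≠ i} => V j.1 ω)

/-- Mutual independence of the whole family `(V i)_i`. -/
def MutIndep {Ω ι : Type} {β : ι → Type} (μ : PMF Ω) (V : ∀ i, Ω → β i) : Prop :=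
  ∀ i, Indep μ (V i) (fun ω => fun j : {j // j ≠ i} => V j.1 ω)

/-- Mutual independence of `(V i)_{i ∈ C}` for a list `C` of indices. -/
def MutIndepL {Ω : Type} (μ : PMF Ω) (V : ℕ → Ω → ℕ) (C : List ℕ) : Prop :=
  ∀ i ∈ C, Indep μ (V i) (fun ω => fun j : {j // j ∈ C ∧ j ≠ i} => V j.1 ω)

/-- The joint random variable `(X a)_{a ∈ A}` for a list `A` of indices. -/
def jointOn {Ω : Type} (X : ℕ → Ω → ℕ) (A : List ℕ) : Ω → ({a : ℕ // a ∈ A} → ℕ) :=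
  fun ω a => X a.1 ω

/-- The joint random variable `(T i)_{i ∈ S}` for a finset `S` of indices. -/
def jointFin {Ω ι : Type} {β : ι → Type} (T : ∀ i, Ω → β i) (S : Finset ι) :
    Ω → ((i : {i // i ∈ S}) → β i.1) :=
  fun ω i => T i.1 ω

/-- The set of parents (in-neighbours) of `w` in the directed graph with edge relation `E`. -/
def parentSet {ν : Type} (E : ν → ν → Prop) (w : ν) : Set ν := {v | E v w}

/-- The set of nodes that are neither descendants nor parents of `w`. -/
def nonDescSet {ν : Type} (E : ν → ν → Prop) (w : ν) : Set ν :=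
  {v | ¬ Relation.ReflTransGen E w v ∧ ¬ E v w}

/-- The collection of random variables `(X v)_v` satisfies the Bayesian network structure
with edge relation `E`: each variable is conditionally independent of its
non-descendant non-parent variables given its parent variables. -/
def SatisfiesBN {Ω ν : Type} {β : ν → Type} (μ : PMF Ω) (X : ∀ v, Ω → β v)
    (E : ν → ν → Prop) : Prop :=
  ∀ w : ν, CondIndep μ (X w)
    (fun ω => fun v : nonDescSet E w => X v.1 ω)
    (fun ω => fun v : parentSet E w => X v.1 ω)

/-- `E` is (the edge list of) a directed acyclic graph on the nodes `{0, …, n-1}`. -/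
def IsDAG (n : ℕ) (E : List (ℕ × ℕ)) : Prop :=
  (∀ e ∈ E, e.1 < n ∧ e.2 < n) ∧
    ∀ i : ℕ, ¬ Relation.TransGen (fun a c => (a, c) ∈ E) i i

/-- The edge relation on `Fin n` determined by an edge list. -/
def edgeRelOn (n : ℕ) (E : List (ℕ × ℕ)) : Fin n → Fin n → Prop :=
  fun i j => ((i : ℕ), (j : ℕ)) ∈ E

/-- `(X_0, …, X_{n-1})` satisfies the Bayesian network given by the edge list `E`. -/
def SatisfiesBNn {Ω : Type} (μ : PMF Ω) (n : ℕ) (X : ℕ → Ω → ℕ)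
    (E : List (ℕ × ℕ)) : Prop :=
  SatisfiesBN μ (fun i : Fin n => X (i : ℕ)) (edgeRelOn n E)

/-- `(A, C, B) ∈ I(G_1, …, G_m)`: every collection of finitely supported discrete random
variables satisfying all the network structures in `Gs` satisfies `X_A ⊥⊥ X_B | X_C`. -/
def ImpliedCI (n : ℕ) (Gs : List (List (ℕ × ℕ))) (A C B : List ℕ) : Prop :=
  ∀ (Ω : Type) (μ : PMF Ω) (X : ℕ → Ω → ℕ),
    (∀ i, i < n → FinSupp μ (X i)) →
    (∀ G ∈ Gs, SatisfiesBNn μ n X G) →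
    CondIndep μ (jointOn X A) (jointOn X B) (jointOn X C)

/-- Two lists are disjoint as sets. -/
def DisjointL (A B : List ℕ) : Prop := ∀ a ∈ A, a ∉ B

end Paper
namespace Paper




open Classical in
lemma pr_congr {Ω : Type} (μ : PMF Ω) (E F : Set Ω)
    (h : ∀ ω ∈ μ.support, (ω ∈ E ↔ ω ∈ F)) : pr μ E = pr μ F := by
  simp only [pr, PMF.toOuterMeasure_apply]
  refine tsum_congr fun ω => ?_
  by_cases hω : μ ω = 0
  · simp [Set.indicator, hω]
  · have := h ω (by simpa [PMF.mem_support_iff] using hω)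
    simp [Set.indicator, this]

lemma pr_pos_elem {Ω α : Type} (μ : PMF Ω) (W : Ω → α) (a : α)
    (h : pr μ {ω | W ω = a} ≠ 0) : ∃ ω ∈ μ.support, W ω = a := by
  simp only [pr, PMF.toOuterMeasure_apply] at h
  by_contra hc
  push_neg at hc
  apply h
  refine ENNReal.summable.tsum_eq_zero_iff |>.2 fun ω => ?_
  by_cases hω : μ ω = 0
  · simp [Set.indicator, hω]
  · have := hc ω (by simpa [PMF.mem_support_iff] using hω)
    simp [Set.indicator, this]

lemma not_elem_of_pr_zero {Ω α : Type} (μ : PMF Ω) (W : Ω → α) (a : α)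
    (h : pr μ {ω | W ω = a} = 0) : ∀ ω ∈ μ.support, W ω ≠ a := by
  intro ω hω hWa
  simp only [pr, PMF.toOuterMeasure_apply] at h
  have hle : μ ω ≤ ∑' (x : Ω), Set.indicator {ω | W ω = a} (⇑μ) x := by
    have : Set.indicator {ω' | W ω' = a} (⇑μ) ω = μ ω := by simp [Set.indicator, hWa]
    rw [← this]; exact ENNReal.le_tsum ω
  rw [h] at hle
  exact (PMF.mem_support_iff μ ω).1 hω (le_antisymm hle zero_le)

open Classical in
/-- Master counting lemma: probability of an event defined through `V`. -/
lemma pr_comp_count {Ω : Type} (μ : PMF Ω) (V : Ω → ℕ) (S : Finset ℕ) (N : ℕ)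
    (hSu : ∀ v ∈ S, pr μ {ω | V ω = v} = (N : ENNReal)⁻¹)
    (hS0 : ∀ v ∉ S, pr μ {ω | V ω = v} = 0)
    (p : ℕ → Prop) [instp : DecidablePred p] :
    pr μ {ω | p (V ω)} = ((S.filter p).card : ENNReal) * (N : ENNReal)⁻¹ := by
  simp only [pr, PMF.toOuterMeasure_apply]
  have step1 : ∀ ω : Ω, Set.indicator {ω' | p (V ω')} (⇑μ) ω
      = ∑' v : ℕ, if V ω = v ∧ p v then μ ω else 0 := by
    intro ω
    rw [tsum_eq_single (V ω) (by intro v hv; simp [Ne.symm hv])]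
    simp [Set.indicator]
  calc ∑' ω, Set.indicator {ω' | p (V ω')} (⇑μ) ω
      = ∑' (ω : Ω) (v : ℕ), if V ω = v ∧ p v then μ ω else 0 := tsum_congr step1
    _ = ∑' (v : ℕ) (ω : Ω), if V ω = v ∧ p v then μ ω else 0 := ENNReal.tsum_comm
    _ = ∑' (v : ℕ), if p v then pr μ {ω | V ω = v} else 0 := by
        refine tsum_congr fun v => ?_
        by_cases hp : p v
        · simp only [hp, and_true, if_true, pr, PMF.toOuterMeasure_apply]
          exact tsum_congr fun ω => by simp [Set.indicator, eq_comm]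
        · simp [hp]
    _ = ∑ v ∈ S.filter p, (N : ENNReal)⁻¹ := by
        refine tsum_eq_sum (fun v hv => ?_) |>.trans (Finset.sum_congr rfl fun v hv => ?_)
        · simp only [Finset.mem_filter, not_and] at hv
          by_cases hp : p v
          · simp only [hp, if_true]
            exact hS0 v (fun hvS => hv hvS hp)
          · simp [hp]
        · simp only [Finset.mem_filter] at hv
          simp [hv.2, hSu v hv.1]
    _ = ((S.filter p).card : ENNReal) * (N : ENNReal)⁻¹ := by
        simp [Finset.sum_const, nsmul_eq_mul]


open Finset Fintype


lemma filter_inst_congr {α : Type*} (s : Finset α) (p : α → Prop) (h₁ h₂ : DecidablePred p) :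
    @Finset.filter α p h₁ s = @Finset.filter α p h₂ s := by
  ext x
  simp only [Finset.mem_filter]

open Classical in
/-- Transfer a count along a bijection. -/
lemma card_filter_of_bij {α β : Type*} (S : Finset α) (P : Finset β) (h : α → β)
    (hmaps : ∀ v ∈ S, h v ∈ P)
    (hinj : ∀ v₁ ∈ S, ∀ v₂ ∈ S, h v₁ = h v₂ → v₁ = v₂)
    (hsurj : ∀ p ∈ P, ∃ v ∈ S, h v = p)
    (q : β → Prop) [instq : DecidablePred q] [instc : DecidablePred fun v => q (h v)] :
    (S.filter (fun v => q (h v))).card = (P.filter q).card := by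
  refine Finset.card_bij (fun v _ => h v) ?_ ?_ ?_
  · intro v hv; simp only [mem_filter] at hv ⊢; exact ⟨hmaps v hv.1, hv.2⟩
  · intro v₁ h₁ v₂ h₂ he
    exact hinj v₁ (mem_filter.1 h₁).1 v₂ (mem_filter.1 h₂).1 he
  · intro b hb
    simp only [mem_filter] at hb
    obtain ⟨v, hv, rfl⟩ := hsurj b hb.1
    exact ⟨v, mem_filter.2 ⟨hv, hb.2⟩, rfl⟩

open Classical in
lemma card_filter_pi_fix_one_aux {k : ℕ} (s : Fin k → Finset ℕ) (i : Fin k) (a : ℕ) :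
    ((piFinset s).filter (fun x => x i = a)).card
      = if a ∈ s i then ∏ j ∈ Finset.univ.erase i, (s j).card else 0 := by
  by_cases ha : a ∈ s i
  · have : (piFinset s).filter (fun x => x i = a)
        = piFinset (Function.update s i {a}) := by
      ext x
      simp only [mem_filter, mem_piFinset]
      constructor
      · rintro ⟨hx, hxi⟩ j
        by_cases hj : j = i
        · subst hj; simp [hxi]
        · simp [Function.update_of_ne hj, hx j]
      · intro hx
        have hxi : x i = a := by have := hx i; simpa using this
        refine ⟨fun j => ?_, hxi⟩
        by_cases hj : j = i
        · subst hj; rw [hxi]; exact ha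
        · have := hx j; simpa [Function.update_of_ne hj] using this
    rw [this, card_piFinset, if_pos ha]
    rw [← Finset.prod_erase_mul _ _ (Finset.mem_univ i), Function.update_self,
      Finset.card_singleton, mul_one]
    exact Finset.prod_congr rfl fun j hj => by
      rw [Function.update_of_ne (Finset.mem_erase.1 hj).1]
  · rw [if_neg ha]
    rw [Finset.card_eq_zero, Finset.filter_eq_empty_iff]
    intro x hx hxi
    exact ha (hxi ▸ mem_piFinset.1 hx i)

open Classical in
lemma card_filter_pi_fix_one {k : ℕ} (s : Fin k → Finset ℕ) (i : Fin k) (a : ℕ)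
    [inst : DecidablePred fun x : Fin k → ℕ => x i = a] :
    (@Finset.filter _ (fun x => x i = a) inst (Fintype.piFinset s)).card
      = if a ∈ s i then ∏ j ∈ Finset.univ.erase i, (s j).card else 0 :=
  (congrArg Finset.card (filter_inst_congr (Fintype.piFinset s) _ inst _)).trans
    (card_filter_pi_fix_one_aux s i a)

open Classical in
lemma card_filter_pi_eq_const_aux {k : ℕ} (s : Fin k → Finset ℕ) (c : Fin k → ℕ) :
    ((piFinset s).filter (fun x => x = c)).card = if (∀ i, c i ∈ s i) then 1 else 0 := by
  by_cases hc : ∀ i, c i ∈ s i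
  · rw [if_pos hc]
    rw [Finset.filter_eq']
    simp [mem_piFinset.2 hc]
  · rw [if_neg hc, Finset.card_eq_zero, Finset.filter_eq_empty_iff]
    rintro x hx rfl
    exact hc (mem_piFinset.1 hx)

open Classical in
lemma card_filter_pi_eq_const {k : ℕ} (s : Fin k → Finset ℕ) (c : Fin k → ℕ)
    [inst : DecidablePred fun x : Fin k → ℕ => x = c] :
    (@Finset.filter _ (fun x => x = c) inst (Fintype.piFinset s)).card
      = if (∀ i, c i ∈ s i) then 1 else 0 :=
  (congrArg Finset.card (filter_inst_congr (Fintype.piFinset s) _ inst _)).trans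
    (card_filter_pi_eq_const_aux s c)

open Classical in
lemma card_filter_pi_fix_rest_aux {k : ℕ} (s : Fin k → Finset ℕ) (i : Fin k)
    (r : {j : Fin k // j ≠ i} → ℕ) :
    ((piFinset s).filter (fun x => ∀ j : {j : Fin k // j ≠ i}, x j.1 = r j)).card
      = if (∀ j : {j : Fin k // j ≠ i}, r j ∈ s j.1) then (s i).card else 0 := by
  by_cases hr : ∀ j : {j : Fin k // j ≠ i}, r j ∈ s j.1
  · rw [if_pos hr]
    have : (piFinset s).filter (fun x => ∀ j : {j : Fin k // j ≠ i}, x j.1 = r j)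
        = piFinset (fun j => if h : j = i then s i else {r ⟨j, h⟩}) := by
      ext x
      simp only [mem_filter, mem_piFinset]
      constructor
      · rintro ⟨hx, hxr⟩ j
        by_cases hj : j = i
        · subst hj; simpa using hx j
        · simp [hj, hxr ⟨j, hj⟩]
      · intro hx
        constructor
        · intro j
          by_cases hj : j = i
          · subst hj; simpa using hx j
          · have := hx j; simp only [hj, dif_neg, not_false_iff] at this
            rw [Finset.mem_singleton.1 this]; exact hr ⟨j, hj⟩
        · intro j
          have := hx j.1
          simp only [j.2, dif_neg, not_false_iff] at this
          simpa using this
    rw [this, card_piFinset]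
    rw [← Finset.prod_erase_mul _ _ (Finset.mem_univ i)]
    simp only [dif_pos rfl]
    have : ∏ j ∈ Finset.univ.erase i, (if h : j = i then s i else {r ⟨j, h⟩}).card = 1 := by
      apply Finset.prod_eq_one
      intro j hj
      simp [dif_neg (Finset.mem_erase.1 hj).1]
    rw [this, one_mul]
    simp
  · rw [if_neg hr, Finset.card_eq_zero, Finset.filter_eq_empty_iff]
    intro x hx hxr
    push_neg at hr
    obtain ⟨j, hj⟩ := hr
    exact hj (hxr j ▸ mem_piFinset.1 hx j.1)

open Classical in
lemma card_filter_pi_fix_rest {k : ℕ} (s : Fin k → Finset ℕ) (i : Fin k)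
    (r : {j : Fin k // j ≠ i} → ℕ)
    [inst : DecidablePred fun x : Fin k → ℕ => ∀ j : {j : Fin k // j ≠ i}, x j.1 = r j] :
    (@Finset.filter _ (fun x => ∀ j : {j : Fin k // j ≠ i}, x j.1 = r j) inst
        (Fintype.piFinset s)).card
      = if (∀ j : {j : Fin k // j ≠ i}, r j ∈ s j.1) then (s i).card else 0 :=
  (congrArg Finset.card (filter_inst_congr (Fintype.piFinset s) _ inst _)).trans
    (card_filter_pi_fix_rest_aux s i r)

/-- If a product of `n` naturals each `≤ ℓ` is `≥ ℓ ^ n`, then each factor is `ℓ`. -/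
lemma factors_eq_of_prod {ι : Type*} [Fintype ι] [DecidableEq ι] (a : ι → ℕ) (ℓ : ℕ)
    (hle : ∀ i, a i ≤ ℓ) (hprod : ℓ ^ (Fintype.card ι) ≤ ∏ i, a i) (hl : 1 ≤ ℓ) :
    ∀ i, a i = ℓ := by
  intro i
  by_contra hne
  have hlt : a i < ℓ := lt_of_le_of_ne (hle i) hne
  have : ∏ j, a j < ℓ ^ (Fintype.card ι) := by
    calc ∏ j, a j ≤ a i * ∏ j ∈ Finset.univ.erase i, ℓ := by
          rw [← Finset.prod_erase_mul _ _ (Finset.mem_univ i), mul_comm]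
          exact Nat.mul_le_mul_left _ (Finset.prod_le_prod' fun j _ => hle j)
      _ < ℓ * ∏ j ∈ Finset.univ.erase i, ℓ := by
          exact Nat.mul_lt_mul_of_lt_of_le hlt le_rfl (Finset.prod_pos fun _ _ => hl)
      _ = ℓ ^ (Fintype.card ι) := by
          rw [Finset.prod_const, ← pow_succ']
          congr 1
          rw [Finset.card_erase_of_mem (Finset.mem_univ i), Finset.card_univ]
          have : 1 ≤ Fintype.card ι := Fintype.card_pos_iff.2 ⟨i⟩
          omega
  omega

lemma all_eq_of_sum_eq {α : Type*} (T : Finset α) (c : α → ℕ) (M : ℕ)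
    (hle : ∀ x ∈ T, c x ≤ M) (hsum : ∑ x ∈ T, c x = T.card * M) :
    ∀ x ∈ T, c x = M := by
  intro x hx
  by_contra hne
  have hlt : c x < M := lt_of_le_of_ne (hle x hx) hne
  have : ∑ y ∈ T, c y < ∑ y ∈ T, M :=
    Finset.sum_lt_sum hle ⟨x, hx, hlt⟩
  rw [Finset.sum_const, smul_eq_mul] at this
  omega


open Finset Fintype

noncomputable def dig (ℓ t m : ℕ) (j : Fin t) : ℕ :=
  if h : m < ℓ ^ t then ((finFunctionFinEquiv.symm ⟨m, h⟩ : Fin t → Fin ℓ) j : ℕ) else 0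

noncomputable def undig (ℓ t : ℕ) (y : Fin t → ℕ) : ℕ :=
  if h : ∀ j, y j < ℓ then ((finFunctionFinEquiv (fun j => (⟨y j, h j⟩ : Fin ℓ))) : ℕ) else 0

lemma dig_lt {ℓ : ℕ} (hl : 1 ≤ ℓ) (t m : ℕ) (j : Fin t) : dig ℓ t m j < ℓ := by
  unfold dig
  split
  · exact (finFunctionFinEquiv.symm _ j).isLt
  · exact hl

lemma undig_dig {ℓ t m : ℕ} (h : m < ℓ ^ t) : undig ℓ t (dig ℓ t m) = m := by
  have hl : ∀ j, dig ℓ t m j < ℓ := fun j => by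
    unfold dig; rw [dif_pos h]; exact (finFunctionFinEquiv.symm _ j).isLt
  unfold undig
  rw [dif_pos hl]
  have : (fun j => (⟨dig ℓ t m j, hl j⟩ : Fin ℓ)) = finFunctionFinEquiv.symm ⟨m, h⟩ := by
    funext j
    apply Fin.ext
    simp only [dig, dif_pos h]
  rw [this, Equiv.apply_symm_apply]

lemma undig_lt {ℓ t : ℕ} (hl : 1 ≤ ℓ) (y : Fin t → ℕ) : undig ℓ t y < ℓ ^ t := by
  unfold undig
  split
  · exact (finFunctionFinEquiv _).isLt
  · exact Nat.one_le_iff_ne_zero.1 (Nat.one_le_pow _ _ hl) |> fun h => Nat.pos_of_ne_zero h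

lemma dig_undig {ℓ t : ℕ} {y : Fin t → ℕ} (h : ∀ j, y j < ℓ) : dig ℓ t (undig ℓ t y) = y := by
  have hlt : undig ℓ t y < ℓ ^ t := by
    unfold undig; rw [dif_pos h]; exact (finFunctionFinEquiv _).isLt
  funext j
  unfold dig
  rw [dif_pos hlt]
  have : (⟨undig ℓ t y, hlt⟩ : Fin (ℓ ^ t)) = finFunctionFinEquiv (fun j => (⟨y j, h j⟩ : Fin ℓ)) := by
    apply Fin.ext
    simp only [undig, dif_pos h]
  rw [this, Equiv.symm_apply_apply]

open Classical in
lemma card_digit_fiber_aux {ℓ : ℕ} (hl : 1 ≤ ℓ) (t : ℕ) (j : Fin t) (d : ℕ) :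
    ((Finset.range (ℓ ^ t)).filter (fun m => dig ℓ t m j = d)).card
      = if d < ℓ then ℓ ^ (t - 1) else 0 := by
  have key : ((Finset.range (ℓ ^ t)).filter (fun m => dig ℓ t m j = d)).card
      = ((piFinset (fun _ : Fin t => Finset.range ℓ)).filter (fun x => x j = d)).card := by
    have := card_filter_of_bij (Finset.range (ℓ ^ t))
      (piFinset (fun _ : Fin t => Finset.range ℓ)) (fun m => dig ℓ t m)
      (fun m _ => by
        rw [mem_piFinset]; intro j'; rw [Finset.mem_range]; exact dig_lt hl t m j')
      (fun m₁ h₁ m₂ h₂ he => by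
        rw [Finset.mem_range] at h₁ h₂
        have := congrArg (undig ℓ t) he
        rwa [undig_dig h₁, undig_dig h₂] at this)
      (fun y hy => by
        rw [mem_piFinset] at hy
        have hy' : ∀ j', y j' < ℓ := fun j' => Finset.mem_range.1 (hy j')
        exact ⟨undig ℓ t y, Finset.mem_range.2 (undig_lt hl y), dig_undig hy'⟩)
      (fun x => x j = d)
    convert this using 2 <;> congr!
  rw [key, card_filter_pi_fix_one]
  by_cases hd : d < ℓ
  · rw [if_pos (Finset.mem_range.2 hd), if_pos hd]
    rw [Finset.prod_const, Finset.card_erase_of_mem (Finset.mem_univ j), Finset.card_univ,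
      Finset.card_range, Fintype.card_fin]
  · rw [if_neg (fun h => hd (Finset.mem_range.1 h)), if_neg hd]

lemma card_digit_fiber {ℓ : ℕ} (hl : 1 ≤ ℓ) (t : ℕ) (j : Fin t) (d : ℕ)
    [inst : DecidablePred fun m : ℕ => dig ℓ t m j = d] :
    (@Finset.filter _ (fun m => dig ℓ t m j = d) inst (Finset.range (ℓ ^ t))).card
      = if d < ℓ then ℓ ^ (t - 1) else 0 :=
  (congrArg Finset.card (filter_inst_congr (Finset.range (ℓ ^ t)) _ inst _)).trans
    (card_digit_fiber_aux hl t j d)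

noncomputable def idx (F : Finset ℕ) (v : ℕ) : ℕ := (F.sort (· ≤ ·)).idxOf v
noncomputable def elt (F : Finset ℕ) (m : ℕ) : ℕ := (F.sort (· ≤ ·)).getD m 0

lemma idx_lt_card {F : Finset ℕ} {v : ℕ} (h : v ∈ F) : idx F v < F.card := by
  rw [idx, ← Finset.length_sort (· ≤ ·)]
  exact List.idxOf_lt_length_iff.2 ((Finset.mem_sort _).2 h)

lemma elt_idx {F : Finset ℕ} {v : ℕ} (h : v ∈ F) : elt F (idx F v) = v := by
  have hlt : idx F v < (F.sort (· ≤ ·)).length :=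
    List.idxOf_lt_length_iff.2 ((Finset.mem_sort _).2 h)
  rw [elt, List.getD_eq_getElem _ _ hlt]
  exact List.getElem_idxOf hlt

lemma elt_mem {F : Finset ℕ} {m : ℕ} (h : m < F.card) : elt F m ∈ F := by
  have hlt : m < (F.sort (· ≤ ·)).length := by rwa [Finset.length_sort]
  rw [elt, List.getD_eq_getElem _ _ hlt]
  exact (Finset.mem_sort _).1 (List.getElem_mem _)

lemma idx_elt {F : Finset ℕ} {m : ℕ} (h : m < F.card) : idx F (elt F m) = m := by
  have hlt : m < (F.sort (· ≤ ·)).length := by rwa [Finset.length_sort]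
  rw [idx, elt, List.getD_eq_getElem _ _ hlt]
  exact (Finset.sort_nodup _ _).idxOf_getElem m hlt



lemma cancel_count {a b N : ℕ} (hN : (N : ENNReal) ≠ 0)
    (h : (a : ENNReal) * (N : ENNReal)⁻¹ = (b : ENNReal) * (N : ENNReal)⁻¹) : a = b := by
  have h2 := congrArg (· * (N : ENNReal)) h
  simp only [mul_assoc, ENNReal.inv_mul_cancel hN (ENNReal.natCast_ne_top N), mul_one] at h2
  exact_mod_cast h2

lemma count_zero_of_pr_zero {a N : ℕ} (hN : (N : ENNReal) ≠ 0)
    (h : (a : ENNReal) * (N : ENNReal)⁻¹ = 0) : a = 0 := by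
  have := cancel_count (a := a) (b := 0) hN (by simpa using h)
  simpa using this

lemma enn_pow_div (ℓ a b : ℕ) (hl : 1 ≤ ℓ) :
    ((ℓ ^ a : ℕ) : ENNReal) * (((ℓ ^ (a + b) : ℕ)) : ENNReal)⁻¹
      = (((ℓ ^ b : ℕ)) : ENNReal)⁻¹ := by
  have h0 : ((ℓ ^ a : ℕ) : ENNReal) ≠ 0 := by
    exact_mod_cast Nat.cast_ne_zero.2 (Nat.one_le_iff_ne_zero.1 (Nat.one_le_pow _ _ hl))
  have htop : ((ℓ ^ a : ℕ) : ENNReal) ≠ ⊤ := ENNReal.natCast_ne_top _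
  rw [pow_add, Nat.cast_mul]
  rw [ENNReal.mul_inv (Or.inl h0) (Or.inl htop), ← mul_assoc,
    ENNReal.mul_inv_cancel h0 htop, one_mul]

lemma enn_of_nat_indep {a b c N : ℕ} (hN : (N : ENNReal) ≠ 0) (h : a * N = b * c) :
    (a : ENNReal) * (N : ENNReal)⁻¹
      = ((b : ENNReal) * (N : ENNReal)⁻¹) * ((c : ENNReal) * (N : ENNReal)⁻¹) := by
  have htop : (N : ENNReal) ≠ ⊤ := ENNReal.natCast_ne_top N
  have hc : ((a : ENNReal) * N) = (b : ENNReal) * c := by exact_mod_cast congrArg (Nat.cast (R := ENNReal)) h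
  calc (a : ENNReal) * (N : ENNReal)⁻¹
      = ((a : ENNReal) * N) * ((N : ENNReal)⁻¹ * (N : ENNReal)⁻¹) := by
        rw [mul_assoc, ← mul_assoc (N : ENNReal), ENNReal.mul_inv_cancel hN htop, one_mul]
    _ = ((b : ENNReal) * c) * ((N : ENNReal)⁻¹ * (N : ENNReal)⁻¹) := by rw [hc]
    _ = ((b : ENNReal) * (N : ENNReal)⁻¹) * ((c : ENNReal) * (N : ENNReal)⁻¹) := by ring

lemma nat_of_enn_indep {a b c N : ℕ} (hN : (N : ENNReal) ≠ 0)
    (h : (a : ENNReal) * (N : ENNReal)⁻¹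
      = ((b : ENNReal) * (N : ENNReal)⁻¹) * ((c : ENNReal) * (N : ENNReal)⁻¹)) :
    a * N = b * c := by
  have htop : (N : ENNReal) ≠ ⊤ := ENNReal.natCast_ne_top N
  have h2 := congrArg (· * ((N : ENNReal) * N)) h
  have e1 : (a : ENNReal) * (N : ENNReal)⁻¹ * ((N : ENNReal) * N) = (a : ENNReal) * N := by
    rw [mul_comm (N : ENNReal) N, mul_assoc, ← mul_assoc (N:ENNReal)⁻¹, ENNReal.inv_mul_cancel hN htop, one_mul]
  have e2 : (b : ENNReal) * (N : ENNReal)⁻¹ * ((c : ENNReal) * (N : ENNReal)⁻¹) * ((N : ENNReal) * N)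
      = (b : ENNReal) * c := by
    have : (b : ENNReal) * (N : ENNReal)⁻¹ * ((c : ENNReal) * (N : ENNReal)⁻¹) * ((N : ENNReal) * N)
        = ((b : ENNReal) * c) * (((N : ENNReal)⁻¹ * N) * ((N : ENNReal)⁻¹ * N)) := by ring
    rw [this, ENNReal.inv_mul_cancel hN htop, one_mul, mul_one]
  rw [e1, e2] at h2
  exact_mod_cast h2


open Finset

open Classical in
lemma fiber_bound (ℓ n k : ℕ) (hl : 1 ≤ ℓ) (hk : k ≤ n) (S : Finset ℕ)
    (hScard : S.card = ℓ ^ n) (f : ℕ → Fin k → ℕ)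
    (hmarg : ∀ (i : Fin k) (a : ℕ), (S.filter (fun v => f v i = a)).card ≤ ℓ ^ (n - 1))
    (hindep : ∀ (i : Fin k) (a : ℕ) (r : {j : Fin k // j ≠ i} → ℕ),
      (S.filter (fun v => f v i = a ∧ ∀ j : {j : Fin k // j ≠ i}, f v j.1 = r j)).card * ℓ ^ n
        = (S.filter (fun v => f v i = a)).card
          * (S.filter (fun v => ∀ j : {j : Fin k // j ≠ i}, f v j.1 = r j)).card) :
    ∀ x : Fin k → ℕ, (S.filter (fun v => f v = x)).card ≤ ℓ ^ (n - k) := by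
  have hpow : 0 < ℓ ^ n := Nat.one_le_pow _ _ hl
  have claim : ∀ j, j ≤ k → ∀ x : Fin k → ℕ,
      (S.filter (fun v => ∀ i : Fin k, (i : ℕ) < j → f v i = x i)).card ≤ ℓ ^ (n - j) := by
    intro j
    induction j with
    | zero =>
      intro _ x
      simpa [hScard] using Finset.card_le_card (Finset.filter_subset _ S)
    | succ j ih =>
      intro hjk x
      have hjk' : j < k := hjk
      have hjn : j < n := lt_of_lt_of_le hjk' hk
      set i₀ : Fin k := ⟨j, hjk'⟩ with hi₀
      set g : ℕ → ({j' : Fin k // j' ≠ i₀} → ℕ) := fun v => fun j' => f v j'.1 with hg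
      set A := S.filter (fun v => ∀ i : Fin k, (i : ℕ) < j + 1 → f v i = x i) with hA
      set W := A.image g with hW
      -- decompose A by fibers of g
      have hdecomp : A.card = ∑ w ∈ W, (A.filter (fun v => g v = w)).card :=
        Finset.card_eq_sum_card_fiberwise (fun v hv => Finset.mem_image_of_mem g hv)
      -- identify each fiber
      have hfib : ∀ w ∈ W, A.filter (fun v => g v = w)
          = S.filter (fun v => f v i₀ = x i₀ ∧ ∀ j' : {j' : Fin k // j' ≠ i₀}, f v j'.1 = w j') := by
        intro w hw
        obtain ⟨v₀, hv₀A, rfl⟩ := Finset.mem_image.1 hw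
        have hv₀ := (Finset.mem_filter.1 hv₀A).2
        ext v
        simp only [hA, Finset.mem_filter, Finset.filter_filter]
        constructor
        · rintro ⟨hvS, hcond, hgv⟩
          exact ⟨hvS, hcond i₀ (by simp [hi₀]), fun j' => congrFun hgv j'⟩
        · rintro ⟨hvS, hfi₀, hrest⟩
          refine ⟨hvS, fun i hi => ?_, funext hrest⟩
          by_cases hii : i = i₀
          · subst hii; exact hfi₀
          · have : (i : ℕ) < j + 1 := hi
            have := hrest ⟨i, hii⟩
            rw [this]
            have hv₀i := hv₀ i (by omega)
            -- w ⟨i,hii⟩ = g v₀ ⟨i,hii⟩ = f v₀ i = x i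
            exact hv₀i
      -- the B_w sets
      set B : ({j' : Fin k // j' ≠ i₀} → ℕ) → Finset ℕ :=
        fun w => S.filter (fun v => ∀ j' : {j' : Fin k // j' ≠ i₀}, f v j'.1 = w j') with hB
      have hBdisj : ∀ w₁ ∈ W, ∀ w₂ ∈ W, w₁ ≠ w₂ → Disjoint (B w₁) (B w₂) := by
        intro w₁ _ w₂ _ hne
        rw [Finset.disjoint_left]
        intro v hv1 hv2
        apply hne
        funext j'
        rw [← (Finset.mem_filter.1 hv1).2 j', (Finset.mem_filter.1 hv2).2 j']
      have hBsub : ∀ w ∈ W, B w ⊆ S.filter (fun v => ∀ i : Fin k, (i : ℕ) < j → f v i = x i) := by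
        intro w hw
        obtain ⟨v₀, hv₀A, rfl⟩ := Finset.mem_image.1 hw
        have hv₀ := (Finset.mem_filter.1 hv₀A).2
        intro v hv
        rcases Finset.mem_filter.1 hv with ⟨hvS, hvw⟩
        refine Finset.mem_filter.2 ⟨hvS, fun i hi => ?_⟩
        have hii : i ≠ i₀ := by
          intro h; rw [h] at hi; simp [hi₀] at hi
        rw [hvw ⟨i, hii⟩]
        exact hv₀ i (by omega)
      have hsumB : ∑ w ∈ W, (B w).card
          ≤ (S.filter (fun v => ∀ i : Fin k, (i : ℕ) < j → f v i = x i)).card := by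
        rw [← Finset.card_biUnion hBdisj]
        apply Finset.card_le_card
        intro v hv
        obtain ⟨w, hw, hvw⟩ := Finset.mem_biUnion.1 hv
        exact hBsub w hw hvw
      -- main computation
      have hmain : A.card * ℓ ^ n ≤ ℓ ^ (n - 1) * ℓ ^ (n - j) := by
        calc A.card * ℓ ^ n = ∑ w ∈ W, (A.filter (fun v => g v = w)).card * ℓ ^ n := by
              rw [hdecomp, Finset.sum_mul]
          _ = ∑ w ∈ W, (S.filter (fun v => f v i₀ = x i₀)).card * (B w).card := by
              refine Finset.sum_congr rfl fun w hw => ?_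
              rw [hfib w hw]
              exact hindep i₀ (x i₀) w
          _ ≤ ∑ w ∈ W, ℓ ^ (n - 1) * (B w).card := by
              refine Finset.sum_le_sum fun w _ => Nat.mul_le_mul_right _ (hmarg i₀ (x i₀))
          _ = ℓ ^ (n - 1) * ∑ w ∈ W, (B w).card := by rw [Finset.mul_sum]
          _ ≤ ℓ ^ (n - 1) * ℓ ^ (n - j) :=
              Nat.mul_le_mul_left _ (le_trans hsumB (ih (le_of_lt hjk') x))
      have hexp : ℓ ^ (n - 1) * ℓ ^ (n - j) = ℓ ^ (n - (j + 1)) * ℓ ^ n := by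
        rw [← pow_add, ← pow_add]
        congr 1
        omega
      rw [hexp] at hmain
      exact Nat.le_of_mul_le_mul_right hmain hpow
  intro x
  have := claim k le_rfl x
  have heq : S.filter (fun v => ∀ i : Fin k, (i : ℕ) < k → f v i = x i)
      = S.filter (fun v => f v = x) := by
    apply Finset.filter_congr
    intro v _
    constructor
    · intro h; funext i; exact h i i.isLt
    · intro h i _; rw [h]
  rwa [heq] at this



lemma card_filter_product_left {α β : Type*} (A : Finset α) (B : Finset β) (q : α → Prop)
    [instq : DecidablePred q] [instp : DecidablePred fun p : α × β => q p.1] :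
    (@Finset.filter _ (fun p => q p.1) instp (A ×ˢ B)).card
      = (@Finset.filter _ q instq A).card * B.card := by
  have h : @Finset.filter _ (fun p => q p.1) instp (A ×ˢ B) = (@Finset.filter _ q instq A) ×ˢ B := by
    ext p
    simp only [Finset.mem_filter, Finset.mem_product]
    tauto
  rw [h, Finset.card_product]

lemma uniformCard_to_cardLE {Ω : Type} {μ : PMF Ω} {W : Ω → ℕ} {ℓ : ℕ}
    (h : UniformCard μ W ℓ) : CardLE μ W ℓ := by
  obtain ⟨T, hT, _, h0⟩ := h
  refine ⟨T, le_of_eq hT, fun ω hω => ?_⟩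
  by_contra hn
  exact not_elem_of_pr_zero μ W _ (h0 _ hn) ω hω rfl

lemma two_one {Ω : Type} (μ : PMF Ω) (ℓ n k : ℕ) (hl : 1 ≤ ℓ) (hn : 1 ≤ n) (hk : k ≤ n)
    (V : Ω → ℕ) (S : Finset ℕ) (hScard : S.card = ℓ ^ n)
    (hSu : ∀ v ∈ S, pr μ {ω | V ω = v} = ((ℓ ^ n : ℕ) : ENNReal)⁻¹)
    (hS0 : ∀ v ∉ S, pr μ {ω | V ω = v} = 0)
    (X : Fin k → Ω → ℕ) (hcard : ∀ i, CardLE μ (X i) ℓ)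
    (Y : Fin (n - k) → Ω → ℕ) (hYcard : ∀ i, CardLE μ (Y i) ℓ)
    (hIE : InfoEq μ (fun ω => (fun i => X i ω, fun i => Y i ω)) V) :
    MutIndep μ X ∧ ∀ i, UniformCard μ (X i) ℓ := by
  have hN0 : ((ℓ ^ n : ℕ) : ENNReal) ≠ 0 :=
    Nat.cast_ne_zero.2 (Nat.one_le_iff_ne_zero.1 (Nat.one_le_pow _ _ hl))
  have hNinv : ((ℓ ^ n : ℕ) : ENNReal)⁻¹ ≠ 0 :=
    ENNReal.inv_ne_zero.2 (ENNReal.natCast_ne_top _)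
  have hattain : ∀ v ∈ S, ∃ ω ∈ μ.support, V ω = v := fun v hv =>
    pr_pos_elem μ V v (by rw [hSu v hv]; exact hNinv)
  obtain ⟨⟨g, hg⟩, ⟨h, hh⟩⟩ := hIE
  choose s hs using hcard
  choose t ht using hYcard
  set P := (piFinset s) ×ˢ (piFinset t) with hP
  have key : ∀ v ∈ S, h v ∈ P ∧ g (h v) = v := by
    intro v hv
    obtain ⟨ω, hω, hVω⟩ := hattain v hv
    have hJ : (fun i => X i ω, fun i => Y i ω) = h v := by rw [← hVω]; exact hh ω hω
    constructor
    · rw [← hJ]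
      refine Finset.mem_product.2 ⟨?_, ?_⟩
      · exact mem_piFinset.2 fun i => (hs i).2 ω hω
      · exact mem_piFinset.2 fun i => (ht i).2 ω hω
    · rw [← hJ, ← hg ω hω, hVω]
  have hinj : ∀ v₁ ∈ S, ∀ v₂ ∈ S, h v₁ = h v₂ → v₁ = v₂ := by
    intro v₁ h₁ v₂ h₂ he
    rw [← (key v₁ h₁).2, ← (key v₂ h₂).2, he]
  have hPle : P.card ≤ ℓ ^ n := by
    rw [hP, Finset.card_product, card_piFinset, card_piFinset]
    calc (∏ i, (s i).card) * ∏ i, (t i).card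
        ≤ (∏ _i : Fin k, ℓ) * ∏ _i : Fin (n - k), ℓ :=
          Nat.mul_le_mul (Finset.prod_le_prod' fun i _ => (hs i).1)
            (Finset.prod_le_prod' fun i _ => (ht i).1)
      _ = ℓ ^ n := by
          rw [Finset.prod_const, Finset.prod_const, Finset.card_univ, Finset.card_univ,
            Fintype.card_fin, Fintype.card_fin, ← pow_add]
          congr 1
          omega
  have hSleP : S.card ≤ P.card :=
    Finset.card_le_card_of_injOn h (fun v hv => (key v hv).1)
      (fun v₁ h₁ v₂ h₂ he => hinj v₁ h₁ v₂ h₂ he)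
  have hPcard : P.card = ℓ ^ n := le_antisymm hPle (hScard ▸ hSleP)
  have hfac : ∀ i : Fin k ⊕ Fin (n - k),
      (Sum.elim (fun i => (s i).card) (fun i => (t i).card)) i = ℓ := by
    apply factors_eq_of_prod _ ℓ
    · rintro (i | i)
      · exact (hs i).1
      · exact (ht i).1
    · rw [Fintype.prod_sum_type]
      simp only [Sum.elim_inl, Sum.elim_inr]
      have hcard : Fintype.card (Fin k ⊕ Fin (n - k)) = n := by
        rw [Fintype.card_sum, Fintype.card_fin, Fintype.card_fin]; omega
      rw [hcard]
      rw [hP, Finset.card_product, card_piFinset, card_piFinset] at hPcard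
      omega
    · exact hl
  have hs_eq : ∀ i, (s i).card = ℓ := fun i => hfac (Sum.inl i)
  have ht_eq : ∀ i, (t i).card = ℓ := fun i => hfac (Sum.inr i)
  have htP : (piFinset t).card = ℓ ^ (n - k) := by
    rw [card_piFinset]
    calc ∏ i, (t i).card = ∏ _i : Fin (n - k), ℓ := Finset.prod_congr rfl fun i _ => ht_eq i
      _ = ℓ ^ (n - k) := by
        rw [Finset.prod_const, Finset.card_univ, Fintype.card_fin]
  have hsurj : ∀ p ∈ P, ∃ v ∈ S, h v = p := by
    intro p hp
    obtain ⟨v, hv, hvp⟩ := Finset.surj_on_of_inj_on_of_card_le (fun v _ => h v)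
      (fun v hv => (key v hv).1) (fun v₁ v₂ h₁ h₂ he => hinj v₁ h₁ v₂ h₂ he)
      (by rw [hPcard, hScard]) p hp
    exact ⟨v, hv, hvp.symm⟩
  have hXv : ∀ ω ∈ μ.support, ∀ i, X i ω = (h (V ω)).1 i := by
    intro ω hω i
    have := hh ω hω
    rw [← this]
  have prq : ∀ (q : (Fin k → ℕ) → Prop) (instq : DecidablePred q)
      (instc : DecidablePred (fun v : ℕ => q ((h v).1)))
      (instp : DecidablePred (fun p : (Fin k → ℕ) × (Fin (n - k) → ℕ) => q p.1)),
      pr μ {ω | q (fun i => X i ω)}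
        = (((@Finset.filter _ q instq (piFinset s)).card * ℓ ^ (n - k) : ℕ) : ENNReal)
          * ((ℓ ^ n : ℕ) : ENNReal)⁻¹ := by
    intro q instq instc instp
    have e2 : (@Finset.filter _ (fun v => q ((h v).1)) instc S).card
        = (@Finset.filter _ q instq (piFinset s)).card * ℓ ^ (n - k) := by
      rw [card_filter_of_bij S P h (fun v hv => (key v hv).1) hinj hsurj
        (fun p => q p.1) (instq := instp) (instc := instc), hP,
        card_filter_product_left (instq := instq) (instp := instp), htP]
    rw [← e2, ← pr_comp_count μ V S (ℓ ^ n) hSu hS0 (fun v => q ((h v).1)) (instp := instc)]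
    apply pr_congr
    intro ω hω
    simp only [Set.mem_setOf_eq]
    rw [show (fun i => X i ω) = (h (V ω)).1 from funext fun i => hXv ω hω i]
  constructor
  · -- mutual independence
    intro i a y
    have hk1 : 1 ≤ k := i.pos
    have eJ := (pr_congr μ {ω | X i ω = a ∧ (fun j : {j : Fin k // j ≠ i} => X j.1 ω) = y} _
        (fun ω hω => by simp only [Set.mem_setOf_eq, funext_iff])).trans
      (prq (fun x => x i = a ∧ ∀ j : {j : Fin k // j ≠ i}, x j.1 = y j)
        inferInstance inferInstance inferInstance)
    have eA := (pr_congr μ {ω | X i ω = a} _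
        (fun ω hω => by simp only [Set.mem_setOf_eq])).trans
      (prq (fun x => x i = a) inferInstance inferInstance inferInstance)
    have eR := (pr_congr μ {ω | (fun j : {j : Fin k // j ≠ i} => X j.1 ω) = y} _
        (fun ω hω => by simp only [Set.mem_setOf_eq, funext_iff])).trans
      (prq (fun x => ∀ j : {j : Fin k // j ≠ i}, x j.1 = y j)
        inferInstance inferInstance inferInstance)
    rw [eJ, eA, eR]
    set cmb : Fin k → ℕ := fun i' => if hii : i' = i then a else y ⟨i', hii⟩ with hcmb
    have hcnteq : (piFinset s).filter
        (fun x => x i = a ∧ ∀ j : {j : Fin k // j ≠ i}, x j.1 = y j)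
        = (piFinset s).filter (fun x => x = cmb) := by
      apply Finset.filter_congr
      intro x _
      constructor
      · rintro ⟨h1, h2⟩
        funext i'
        by_cases hii : i' = i
        · subst hii; rw [hcmb]; simp [h1]
        · rw [hcmb]; simp only [hii, dif_neg, not_false_iff]; exact h2 ⟨i', hii⟩
      · rintro rfl
        constructor
        · rw [hcmb]; simp
        · intro j
          rw [hcmb]
          simp only [j.2, dif_neg, not_false_iff]
    have hcmbmem : (∀ i', cmb i' ∈ s i')
        ↔ (a ∈ s i ∧ ∀ j : {j : Fin k // j ≠ i}, y j ∈ s j.1) := by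
      constructor
      · intro hc
        refine ⟨by simpa [hcmb] using hc i, fun j => ?_⟩
        have hj := hc j.1
        rw [hcmb] at hj
        simp only at hj
        rw [dif_neg j.2] at hj
        simpa using hj
      · rintro ⟨h1, h2⟩ i'
        by_cases hii : i' = i
        · subst hii; simpa [hcmb] using h1
        · simp only [hcmb]
          rw [dif_neg hii]
          exact h2 ⟨i', hii⟩
    rw [hcnteq, card_filter_pi_eq_const, card_filter_pi_fix_one, card_filter_pi_fix_rest]
    have herase : ∏ j ∈ Finset.univ.erase i, (s j).card = ℓ ^ (k - 1) := by
      calc ∏ j ∈ Finset.univ.erase i, (s j).card = ∏ _j ∈ Finset.univ.erase i, ℓ :=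
            Finset.prod_congr rfl fun j _ => hs_eq j
        _ = ℓ ^ (k - 1) := by
            rw [Finset.prod_const, Finset.card_erase_of_mem (Finset.mem_univ i),
              Finset.card_univ, Fintype.card_fin]
    rw [herase, hs_eq i]
    apply enn_of_nat_indep hN0
    by_cases h1 : a ∈ s i <;> by_cases h2 : ∀ j : {j : Fin k // j ≠ i}, y j ∈ s j.1
    · rw [if_pos (hcmbmem.2 ⟨h1, h2⟩), if_pos h1, if_pos h2]
      rw [one_mul]
      have e : ℓ ^ (k - 1) * ℓ ^ (n - k) * (ℓ * ℓ ^ (n - k))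
          = ℓ ^ (k - 1 + (n - k) + 1 + (n - k)) := by ring
      rw [e, ← pow_add]
      congr 1
      omega
    · rw [if_neg (fun hc => h2 (hcmbmem.1 hc).2), if_neg h2]
      simp
    · rw [if_neg (fun hc => h1 (hcmbmem.1 hc).1), if_neg h1]
      simp
    · rw [if_neg (fun hc => h1 (hcmbmem.1 hc).1), if_neg h1]
      simp
  · -- uniformity
    intro i
    have hk1 : 1 ≤ k := i.pos
    refine ⟨s i, hs_eq i, ?_, ?_⟩
    · intro a ha
      have e := (pr_congr μ {ω | X i ω = a} _
          (fun ω hω => by simp only [Set.mem_setOf_eq])).trans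
        (prq (fun x => x i = a) inferInstance inferInstance inferInstance)
      rw [e, card_filter_pi_fix_one, if_pos ha]
      have herase : ∏ j ∈ Finset.univ.erase i, (s j).card = ℓ ^ (k - 1) := by
        calc ∏ j ∈ Finset.univ.erase i, (s j).card = ∏ _j ∈ Finset.univ.erase i, ℓ :=
              Finset.prod_congr rfl fun j _ => hs_eq j
          _ = ℓ ^ (k - 1) := by
              rw [Finset.prod_const, Finset.card_erase_of_mem (Finset.mem_univ i),
                Finset.card_univ, Fintype.card_fin]
      rw [herase, ← pow_add]
      have hexp : k - 1 + (n - k) = n - 1 := by omega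
      rw [hexp]
      have hpd := enn_pow_div ℓ (n - 1) 1 hl
      rw [show n - 1 + 1 = n from by omega, pow_one] at hpd
      exact hpd
    · intro a ha
      have e := (pr_congr μ {ω | X i ω = a} _
          (fun ω hω => by simp only [Set.mem_setOf_eq])).trans
        (prq (fun x => x i = a) inferInstance inferInstance inferInstance)
      rw [e, card_filter_pi_fix_one, if_neg ha]
      simp


lemma one_three {Ω : Type} (μ : PMF Ω) (ℓ n k : ℕ) (hl : 1 ≤ ℓ) (hn : 1 ≤ n) (hk : k ≤ n)
    (V : Ω → ℕ) (S : Finset ℕ) (hScard : S.card = ℓ ^ n)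
    (hSu : ∀ v ∈ S, pr μ {ω | V ω = v} = ((ℓ ^ n : ℕ) : ENNReal)⁻¹)
    (hS0 : ∀ v ∉ S, pr μ {ω | V ω = v} = 0)
    (X : Fin k → Ω → ℕ) (f : ℕ → Fin k → ℕ)
    (hf : ∀ ω ∈ μ.support, (fun i => X i ω) = f (V ω))
    (hMI : MutIndep μ X) (hU : ∀ i, UniformCard μ (X i) ℓ) :
    ∃ Y : Fin (n - k) → Ω → ℕ, (∀ i, UniformCard μ (Y i) ℓ) ∧
      InfoEq μ (fun ω => (fun i => X i ω, fun i => Y i ω)) V := by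
  have hN0 : ((ℓ ^ n : ℕ) : ENNReal) ≠ 0 :=
    Nat.cast_ne_zero.2 (Nat.one_le_iff_ne_zero.1 (Nat.one_le_pow _ _ hl))
  have hNinv : ((ℓ ^ n : ℕ) : ENNReal)⁻¹ ≠ 0 :=
    ENNReal.inv_ne_zero.2 (ENNReal.natCast_ne_top _)
  have hattain : ∀ v ∈ S, ∃ ω ∈ μ.support, V ω = v := fun v hv =>
    pr_pos_elem μ V v (by rw [hSu v hv]; exact hNinv)
  have hVS : ∀ ω ∈ μ.support, V ω ∈ S := by
    intro ω hω
    by_contra hv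
    exact not_elem_of_pr_zero μ V (V ω) (hS0 _ hv) ω hω rfl
  choose s hs using hU
  have hXmem : ∀ ω ∈ μ.support, ∀ i, X i ω ∈ s i := by
    intro ω hω i
    by_contra hx
    exact not_elem_of_pr_zero μ (X i) _ ((hs i).2.2 _ hx) ω hω rfl
  have hXf : ∀ ω ∈ μ.support, ∀ i, X i ω = f (V ω) i := fun ω hω i => congrFun (hf ω hω) i
  -- marginal probabilities as counts
  have prXa : ∀ (i : Fin k) (a : ℕ), pr μ {ω | X i ω = a}
      = (((S.filter (fun v => f v i = a)).card : ℕ) : ENNReal)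
        * ((ℓ ^ n : ℕ) : ENNReal)⁻¹ := by
    intro i a
    rw [← pr_comp_count μ V S (ℓ ^ n) hSu hS0 (fun v => f v i = a)]
    apply pr_congr
    intro ω hω
    simp only [Set.mem_setOf_eq, hXf ω hω]
  have hmargN : ∀ (i : Fin k) (a : ℕ),
      (S.filter (fun v => f v i = a)).card ≤ ℓ ^ (n - 1) := by
    intro i a
    by_cases ha : a ∈ s i
    · have h2 := prXa i a
      rw [(hs i).2.1 a ha] at h2
      have h3 := enn_pow_div ℓ (n - 1) 1 hl
      rw [show n - 1 + 1 = n from by omega, pow_one] at h3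
      exact le_of_eq (cancel_count hN0 (h2.symm.trans h3.symm))
    · have h2 := prXa i a
      rw [(hs i).2.2 a ha] at h2
      rw [count_zero_of_pr_zero hN0 h2.symm]
      exact Nat.zero_le _
  have hindepN : ∀ (i : Fin k) (a : ℕ) (r : {j : Fin k // j ≠ i} → ℕ),
      (S.filter (fun v => f v i = a ∧ ∀ j : {j : Fin k // j ≠ i}, f v j.1 = r j)).card * ℓ ^ n
        = (S.filter (fun v => f v i = a)).card
          * (S.filter (fun v => ∀ j : {j : Fin k // j ≠ i}, f v j.1 = r j)).card := by
    intro i a r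
    have hI := hMI i a r
    have prJ : pr μ {ω | X i ω = a ∧ (fun j : {j : Fin k // j ≠ i} => X j.1 ω) = r}
        = (((S.filter (fun v => f v i = a ∧ ∀ j : {j : Fin k // j ≠ i}, f v j.1 = r j)).card : ℕ)
            : ENNReal) * ((ℓ ^ n : ℕ) : ENNReal)⁻¹ := by
      rw [← pr_comp_count μ V S (ℓ ^ n) hSu hS0
        (fun v => f v i = a ∧ ∀ j : {j : Fin k // j ≠ i}, f v j.1 = r j)]
      apply pr_congr
      intro ω hω
      simp only [Set.mem_setOf_eq, funext_iff, hXf ω hω]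
    have prR : pr μ {ω | (fun j : {j : Fin k // j ≠ i} => X j.1 ω) = r}
        = (((S.filter (fun v => ∀ j : {j : Fin k // j ≠ i}, f v j.1 = r j)).card : ℕ) : ENNReal)
          * ((ℓ ^ n : ℕ) : ENNReal)⁻¹ := by
      rw [← pr_comp_count μ V S (ℓ ^ n) hSu hS0
        (fun v => ∀ j : {j : Fin k // j ≠ i}, f v j.1 = r j)]
      apply pr_congr
      intro ω hω
      simp only [Set.mem_setOf_eq, funext_iff, hXf ω hω]
    rw [prJ, prR, prXa i a] at hI
    exact nat_of_enn_indep hN0 hI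
  have hbound := fiber_bound ℓ n k hl hk S hScard f hmargN hindepN
  set T := S.image f with hT
  have hpiS : (piFinset s).card = ℓ ^ k := by
    rw [card_piFinset]
    calc ∏ i, (s i).card = ∏ _i : Fin k, ℓ := Finset.prod_congr rfl fun i _ => (hs i).1
      _ = ℓ ^ k := by rw [Finset.prod_const, Finset.card_univ, Fintype.card_fin]
  have hTpi : T ⊆ piFinset s := by
    intro x hx
    obtain ⟨v, hv, rfl⟩ := Finset.mem_image.1 hx
    obtain ⟨ω, hω, hVω⟩ := hattain v hv
    refine mem_piFinset.2 fun i => ?_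
    rw [← hVω, ← hXf ω hω i]
    exact hXmem ω hω i
  have hTle : T.card ≤ ℓ ^ k := hpiS ▸ Finset.card_le_card hTpi
  have hsum : ∑ x ∈ T, (S.filter (fun v => f v = x)).card = ℓ ^ n := by
    rw [← hScard]
    exact (Finset.card_eq_sum_card_fiberwise (fun v hv => Finset.mem_image_of_mem f hv)).symm
  have hle2 : ℓ ^ n ≤ T.card * ℓ ^ (n - k) := by
    rw [← hsum]
    have := Finset.sum_le_card_nsmul T _ (ℓ ^ (n - k)) (fun x _ => hbound x)
    simpa [smul_eq_mul] using this
  have hTmul : T.card * ℓ ^ (n - k) = ℓ ^ n := by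
    refine le_antisymm ?_ hle2
    calc T.card * ℓ ^ (n - k) ≤ ℓ ^ k * ℓ ^ (n - k) := Nat.mul_le_mul_right _ hTle
      _ = ℓ ^ n := by rw [← pow_add]; congr 1; omega
  have hTcard : T.card = ℓ ^ k := by
    have hp : 0 < ℓ ^ (n - k) := Nat.one_le_pow _ _ hl
    have : T.card * ℓ ^ (n - k) = ℓ ^ k * ℓ ^ (n - k) := by
      rw [hTmul, ← pow_add]; congr 1; omega
    exact Nat.eq_of_mul_eq_mul_right hp this
  have hfibeq : ∀ x ∈ T, (S.filter (fun v => f v = x)).card = ℓ ^ (n - k) :=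
    all_eq_of_sum_eq T _ _ (fun x _ => hbound x)
      (hsum.trans (by rw [← hTmul]))
  -- define Y via the base-ℓ digits of the index of V inside its fiber
  refine ⟨fun j ω => dig ℓ (n - k) (idx (S.filter (fun u => f u = f (V ω))) (V ω)) j,
    ?_, ?_, ?_⟩
  · -- uniformity of the Y's
    intro j
    have hd1 : 1 ≤ n - k := j.pos
    refine ⟨Finset.range ℓ, Finset.card_range ℓ, ?_, ?_⟩
    · intro d hd
      rw [Finset.mem_range] at hd
      have ecount : pr μ {ω | dig ℓ (n - k) (idx (S.filter (fun u => f u = f (V ω))) (V ω)) j = d}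
          = (((S.filter (fun v =>
                dig ℓ (n - k) (idx (S.filter (fun u => f u = f v)) v) j = d)).card : ℕ) : ENNReal)
            * ((ℓ ^ n : ℕ) : ENNReal)⁻¹ := by
        rw [← pr_comp_count μ V S (ℓ ^ n) hSu hS0
          (fun v => dig ℓ (n - k) (idx (S.filter (fun u => f u = f v)) v) j = d)]
      have hc1 : (S.filter (fun v =>
            dig ℓ (n - k) (idx (S.filter (fun u => f u = f v)) v) j = d)).card
          = ∑ x ∈ T, ((S.filter (fun v =>
              dig ℓ (n - k) (idx (S.filter (fun u => f u = f v)) v) j = d)).filter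
                (fun v => f v = x)).card :=
        Finset.card_eq_sum_card_fiberwise
          (fun v hv => Finset.mem_image_of_mem f (Finset.mem_filter.1 hv).1)
      have hc2 : ∀ x ∈ T, ((S.filter (fun v =>
            dig ℓ (n - k) (idx (S.filter (fun u => f u = f v)) v) j = d)).filter
              (fun v => f v = x)).card = ℓ ^ (n - k - 1) := by
        intro x hx
        have hsetF : (S.filter (fun v =>
              dig ℓ (n - k) (idx (S.filter (fun u => f u = f v)) v) j = d)).filter
                (fun v => f v = x)
            = (S.filter (fun v => f v = x)).filter
                (fun v => dig ℓ (n - k) (idx (S.filter (fun u => f u = x)) v) j = d) := by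
          ext v
          simp only [Finset.mem_filter]
          constructor
          · rintro ⟨⟨hvS, hp⟩, hfx⟩
            refine ⟨⟨hvS, hfx⟩, ?_⟩
            rw [← hfx]
            exact hp
          · rintro ⟨⟨hvS, hfx⟩, hdd⟩
            refine ⟨⟨hvS, ?_⟩, hfx⟩
            rw [hfx]
            exact hdd
        have hxcard : (S.filter (fun v => f v = x)).card = ℓ ^ (n - k) := hfibeq x hx
        have hbij := card_filter_of_bij (S.filter (fun v => f v = x))
          (Finset.range (ℓ ^ (n - k))) (fun v => idx (S.filter (fun u => f u = x)) v)
          (fun v hv => by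
            rw [Finset.mem_range, ← hxcard]
            exact idx_lt_card (by simpa using hv))
          (fun v₁ h₁ v₂ h₂ he => by
            have e1 : elt (S.filter (fun u => f u = x)) (idx (S.filter (fun u => f u = x)) v₁) = v₁ :=
              elt_idx (by simpa using h₁)
            have e2 : elt (S.filter (fun u => f u = x)) (idx (S.filter (fun u => f u = x)) v₂) = v₂ :=
              elt_idx (by simpa using h₂)
            rw [← e1, ← e2]
            exact congrArg (elt (S.filter (fun u => f u = x))) he)
          (fun m hm => by
            rw [Finset.mem_range, ← hxcard] at hm
            refine ⟨elt (S.filter (fun u => f u = x)) m, ?_, idx_elt hm⟩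
            simpa using elt_mem hm)
          (fun m => dig ℓ (n - k) m j = d)
        rw [hsetF, hbij, card_digit_fiber hl (n - k) j d, if_pos hd]
      have hcount : (S.filter (fun v =>
            dig ℓ (n - k) (idx (S.filter (fun u => f u = f v)) v) j = d)).card
          = ℓ ^ (n - 1) := by
        rw [hc1, Finset.sum_congr rfl hc2, Finset.sum_const, smul_eq_mul, hTcard, ← pow_add]
        congr 1
        omega
      rw [ecount, hcount]
      have h3 := enn_pow_div ℓ (n - 1) 1 hl
      rw [show n - 1 + 1 = n from by omega, pow_one] at h3
      exact h3
    · intro d hd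
      rw [Finset.mem_range] at hd
      have : ∀ v, ¬ (dig ℓ (n - k) (idx (S.filter (fun u => f u = f v)) v) j = d) := by
        intro v hv
        exact hd (hv ▸ dig_lt hl (n - k) _ j)
      have ecount : pr μ {ω | dig ℓ (n - k) (idx (S.filter (fun u => f u = f (V ω))) (V ω)) j = d}
          = (((S.filter (fun v =>
                dig ℓ (n - k) (idx (S.filter (fun u => f u = f v)) v) j = d)).card : ℕ) : ENNReal)
            * ((ℓ ^ n : ℕ) : ENNReal)⁻¹ := by
        rw [← pr_comp_count μ V S (ℓ ^ n) hSu hS0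
          (fun v => dig ℓ (n - k) (idx (S.filter (fun u => f u = f v)) v) j = d)]
      rw [ecount]
      have : (S.filter (fun v =>
          dig ℓ (n - k) (idx (S.filter (fun u => f u = f v)) v) j = d)).card = 0 := by
        rw [Finset.card_eq_zero, Finset.filter_eq_empty_iff]
        intro v _
        exact this v
      rw [this]
      simp
  · -- V is a function of (X, Y)
    refine ⟨fun pq : (Fin k → ℕ) × (Fin (n - k) → ℕ) =>
      elt (S.filter (fun u => f u = pq.1)) (undig ℓ (n - k) pq.2), ?_⟩
    intro ω hω
    have hvS := hVS ω hω
    have hvF : V ω ∈ S.filter (fun u => f u = f (V ω)) :=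
      Finset.mem_filter.2 ⟨hvS, rfl⟩
    have hFcard : (S.filter (fun u => f u = f (V ω))).card = ℓ ^ (n - k) :=
      hfibeq (f (V ω)) (Finset.mem_image_of_mem f hvS)
    have hidxlt : idx (S.filter (fun u => f u = f (V ω))) (V ω) < ℓ ^ (n - k) :=
      hFcard ▸ idx_lt_card hvF
    show V ω = elt (S.filter (fun u => f u = (fun i => X i ω)))
      (undig ℓ (n - k) (fun j => dig ℓ (n - k) (idx (S.filter (fun u => f u = f (V ω))) (V ω)) j))
    rw [hf ω hω]
    rw [show (fun j => dig ℓ (n - k) (idx (S.filter (fun u => f u = f (V ω))) (V ω)) j)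
      = dig ℓ (n - k) (idx (S.filter (fun u => f u = f (V ω))) (V ω)) from rfl]
    rw [undig_dig hidxlt, elt_idx hvF]
  · -- (X, Y) is a function of V
    refine ⟨fun v => (f v, fun j => dig ℓ (n - k) (idx (S.filter (fun u => f u = f v)) v) j), ?_⟩
    intro ω hω
    exact congrArg₂ Prod.mk (hf ω hω) rfl


/-- Lemma 5 of the paper: for `V ∼ Unif({1,…,ℓ^n})` and `X_1,…,X_k` (with `k ≤ n`) of
cardinalities at most `ℓ` that are functions of `V`, the three statements are
equivalent: (1) the `X_i` are mutually independent, each uniform with cardinality `ℓ`;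
(2) there are `Y_1,…,Y_{n-k}` of cardinalities at most `ℓ` with `((X_i), (Y_i)) =ι V`;
(3) there are `Y_1,…,Y_{n-k}`, each uniform with cardinality `ℓ`, with
`((X_i), (Y_i)) =ι V`. -/
theorem iid_extend {Ω : Type} (μ : PMF Ω) (ℓ n k : ℕ)
    (hl : 1 ≤ ℓ) (hn : 1 ≤ n) (hk : k ≤ n)
    (V : Ω → ℕ) (hV : UniformCard μ V (ℓ ^ n))
    (X : Fin k → Ω → ℕ)
    (hcard : ∀ i, CardLE μ (X i) ℓ)
    (hfd : FunDep μ V (fun ω => fun i => X i ω)) :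
    ((MutIndep μ X ∧ ∀ i, UniformCard μ (X i) ℓ) ↔
      (∃ Y : Fin (n - k) → Ω → ℕ, (∀ i, CardLE μ (Y i) ℓ) ∧
        InfoEq μ (fun ω => (fun i => X i ω, fun i => Y i ω)) V)) ∧
    ((∃ Y : Fin (n - k) → Ω → ℕ, (∀ i, CardLE μ (Y i) ℓ) ∧
        InfoEq μ (fun ω => (fun i => X i ω, fun i => Y i ω)) V) ↔
      (∃ Y : Fin (n - k) → Ω → ℕ, (∀ i, UniformCard μ (Y i) ℓ) ∧
        InfoEq μ (fun ω => (fun i => X i ω, fun i => Y i ω)) V)) := by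
  obtain ⟨S, hScard, hSu, hS0⟩ := hV
  obtain ⟨f, hfm⟩ := hfd
  have h13 : (MutIndep μ X ∧ ∀ i, UniformCard μ (X i) ℓ) →
      (∃ Y : Fin (n - k) → Ω → ℕ, (∀ i, UniformCard μ (Y i) ℓ) ∧
        InfoEq μ (fun ω => (fun i => X i ω, fun i => Y i ω)) V) := fun h =>
    one_three μ ℓ n k hl hn hk V S hScard hSu hS0 X f hfm h.1 h.2
  have h21 : (∃ Y : Fin (n - k) → Ω → ℕ, (∀ i, CardLE μ (Y i) ℓ) ∧
      InfoEq μ (fun ω => (fun i => X i ω, fun i => Y i ω)) V) →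
      (MutIndep μ X ∧ ∀ i, UniformCard μ (X i) ℓ) := by
    rintro ⟨Y, hYc, hIE⟩
    exact two_one μ ℓ n k hl hn hk V S hScard hSu hS0 X hcard Y hYc hIE
  have h32 : (∃ Y : Fin (n - k) → Ω → ℕ, (∀ i, UniformCard μ (Y i) ℓ) ∧
      InfoEq μ (fun ω => (fun i => X i ω, fun i => Y i ω)) V) →
      (∃ Y : Fin (n - k) → Ω → ℕ, (∀ i, CardLE μ (Y i) ℓ) ∧
        InfoEq μ (fun ω => (fun i => X i ω, fun i => Y i ω)) V) := by
    rintro ⟨Y, hYu, hIE⟩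
    exact ⟨Y, fun i => uniformCard_to_cardLE (hYu i), hIE⟩
  exact ⟨⟨fun h => h32 (h13 h), h21⟩, ⟨fun h => h13 (h21 h), h32⟩⟩


end Paper
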